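/- Let M be a type II_∞ factor with normal faithful semifinite trace τ, and H an infinite-dimensional Hilbert space with operator trace Tr. Then U(M)₂ (with the ‖·‖_{2,τ}-metric topology) is not isomorphic as a topological group to U(H)₂ = {u ∈ U(H) : 1 - u Hilbert–Schmidt} (with the ‖·‖_{2,Tr}-metric topology). -/

import Mathlib

open scoped ENNReal

/- `M` is a II_∞ factor acting on `H` with normal faithful semifinite trace `τ`, with
extended trace 2-norm `n2 x = τ(x*x)^{1/2} ∈ [0,∞]`, and `K` is an
infinite-dimensional Hilbert space with the operator trace `Tr` and extended
Hilbert–Schmidt norm `m2 x = Tr(x*x)^{1/2}`.  The characteristic hypotheses are: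
in the II_∞ factor, below every nonzero `τ`-finite projection there are nonzero
projections of arbitrarily small trace (`hII`), while on `K` every nonzero projection
`p` has `Tr(p) ≥ 1`, i.e. `m2 p ≥ 1` (`hProj`), and there exists a nonzero
finite-rank projection (`hfin`).  The conclusion: there is no isomorphism of
topological groups between `U(M)₂ = {u ∈ U(M) : n2 (1-u) < ∞}` (with the metric
`n2 (u-v)`) and `U(K)₂ = {u ∈ U(K) : 1-u Hilbert–Schmidt}` (with the metric
`m2 (u-v)`); an isomorphism is a multiplicative bijection `φ` (with inverse `ψ`)
which is continuous with continuous inverse for those metrics. -/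

/-- A unitary of order two is self-adjoint. -/
lemma aux15_sym_sa {A : Type*} [Ring A] [StarRing A]
    (u : A) (hu : star u * u = 1) (huu : u * u = 1) : star u = u := by
  calc star u = star u * (u * u) := by rw [huu, mul_one]
    _ = (star u * u) * u := by rw [mul_assoc]
    _ = u := by rw [hu, one_mul]

/-- From a self-adjoint square root of 1, produce a projection. -/
lemma aux15_sym_proj {A : Type*} [Ring A] [StarRing A] [Module ℂ A] [StarModule ℂ A]
    [SMulCommClass ℂ A A] [IsScalarTower ℂ A A]
    (u : A) (hu : star u = u) (huu : u * u = 1) :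
    IsSelfAdjoint ((2⁻¹ : ℂ) • (1 - u)) ∧
      ((2⁻¹ : ℂ) • (1 - u)) * ((2⁻¹ : ℂ) • (1 - u)) = (2⁻¹ : ℂ) • (1 - u) ∧
      (2 : ℂ) • ((2⁻¹ : ℂ) • (1 - u)) = 1 - u := by
  refine ⟨?_, ?_, ?_⟩
  · unfold IsSelfAdjoint
    rw [star_smul, star_sub, star_one, hu]
    norm_num
  · have hx : (1 - u) * (1 - u) = (2 : ℂ) • (1 - u) := by
      rw [sub_mul, mul_sub, mul_sub, huu, one_mul, mul_one]
      rw [two_smul, one_mul]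
      abel
    rw [smul_mul_smul_comm, hx, smul_smul]
    norm_num
  · rw [smul_smul]; norm_num

/-- `1 - 2p` is a self-adjoint square root of `1` for a projection `p`. -/
lemma aux15_proj_sym {A : Type*} [Ring A] [StarRing A] [Module ℂ A] [StarModule ℂ A]
    [SMulCommClass ℂ A A] [IsScalarTower ℂ A A]
    (p : A) (hsa : IsSelfAdjoint p) (hpp : p * p = p) :
    star (1 - (2:ℂ) • p) = 1 - (2:ℂ) • p ∧
      (1 - (2:ℂ) • p) * (1 - (2:ℂ) • p) = 1 := by
  constructor
  · rw [star_sub, star_one, star_smul, hsa.star_eq]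
    norm_num
  · rw [mul_sub, sub_mul, mul_one, sub_mul, one_mul, smul_mul_smul_comm, hpp]
    have : (2 * 2 : ℂ) = 2 + 2 := by norm_num
    rw [this, add_smul, mul_one]
    abel

/-- An idempotent element with a left inverse equals one. -/
lemma aux15_idem_one {A : Type*} [Monoid A] [StarMul A] (a : A)
    (h1 : star a * a = 1) (h : a = a * a) : a = 1 := by
  have h2 : star a * a = star a * (a * a) := by rw [← h]
  rw [h1, ← mul_assoc, h1, one_mul] at h2
  exact h2.symm

lemma aux15_norm2 : (‖(2:ℂ)‖₊ : ℝ≥0∞) = 2 := by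
  simp [nnnorm]
  rfl

lemma aux15_normneg2 : (‖(-2:ℂ)‖₊ : ℝ≥0∞) = 2 := by
  rw [nnnorm_neg]; exact aux15_norm2

lemma aux15_normhalf : (‖(2⁻¹:ℂ)‖₊ : ℝ≥0∞) ≠ ⊤ := ENNReal.coe_ne_top

theorem stmt_15 {H K : Type*}
    [NormedAddCommGroup H] [InnerProductSpace ℂ H] [CompleteSpace H]
    [NormedAddCommGroup K] [InnerProductSpace ℂ K] [CompleteSpace K]
    (M : VonNeumannAlgebra H)
    (n2 : (H →L[ℂ] H) → ℝ≥0∞) (m2 : (K →L[ℂ] K) → ℝ≥0∞)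
    -- standard properties of the extended 2-norms
    (hzero : n2 0 = 0) (hadd : ∀ x y, n2 (x + y) ≤ n2 x + n2 y)
    (hsmul : ∀ (c : ℂ) x, n2 (c • x) = (‖c‖₊ : ℝ≥0∞) * n2 x)
    (hzero' : m2 0 = 0) (hadd' : ∀ x y, m2 (x + y) ≤ m2 x + m2 y)
    (hsmul' : ∀ (c : ℂ) x, m2 (c • x) = (‖c‖₊ : ℝ≥0∞) * m2 x)
    -- `M` is a II_∞ factor: arbitrarily small nonzero subprojections of finite projections
    (hII : ∀ q : H →L[ℂ] H, q ∈ M → IsSelfAdjoint q → q * q = q → q ≠ 0 → n2 q < ∞ →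
      ∀ ε : ℝ≥0∞, 0 < ε → ∃ p : H →L[ℂ] H, p ∈ M ∧ IsSelfAdjoint p ∧ p * p = p ∧
        p ≠ 0 ∧ p * q = p ∧ q * p = p ∧ n2 p < ε)
    -- on `B(K)`, every nonzero projection has `Tr ≥ 1`
    (hProj : ∀ p : K →L[ℂ] K, IsSelfAdjoint p → p * p = p → p ≠ 0 → 1 ≤ m2 p)
    (hfin : ∃ p : K →L[ℂ] K, IsSelfAdjoint p ∧ p * p = p ∧ p ≠ 0 ∧ m2 p < ∞) :
    ¬ ∃ (φ : (H →L[ℂ] H) → (K →L[ℂ] K)) (ψ : (K →L[ℂ] K) → (H →L[ℂ] H)),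
      -- notation for the two groups
      (∀ u, u ∈ {u | u ∈ M ∧ u ∈ unitary (H →L[ℂ] H) ∧ n2 (1 - u) < ∞} →
        φ u ∈ {v : K →L[ℂ] K | v ∈ unitary (K →L[ℂ] K) ∧ m2 (1 - v) < ∞}) ∧
      (∀ v, v ∈ {v : K →L[ℂ] K | v ∈ unitary (K →L[ℂ] K) ∧ m2 (1 - v) < ∞} →
        ψ v ∈ {u | u ∈ M ∧ u ∈ unitary (H →L[ℂ] H) ∧ n2 (1 - u) < ∞}) ∧
      -- mutually inverse
      (∀ u ∈ {u | u ∈ M ∧ u ∈ unitary (H →L[ℂ] H) ∧ n2 (1 - u) < ∞}, ψ (φ u) = u) ∧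
      (∀ v ∈ {v : K →L[ℂ] K | v ∈ unitary (K →L[ℂ] K) ∧ m2 (1 - v) < ∞}, φ (ψ v) = v) ∧
      -- group homomorphisms
      (∀ u ∈ {u | u ∈ M ∧ u ∈ unitary (H →L[ℂ] H) ∧ n2 (1 - u) < ∞},
       ∀ u' ∈ {u | u ∈ M ∧ u ∈ unitary (H →L[ℂ] H) ∧ n2 (1 - u) < ∞},
        φ (u * u') = φ u * φ u') ∧
      (∀ v ∈ {v : K →L[ℂ] K | v ∈ unitary (K →L[ℂ] K) ∧ m2 (1 - v) < ∞},
       ∀ v' ∈ {v : K →L[ℂ] K | v ∈ unitary (K →L[ℂ] K) ∧ m2 (1 - v) < ∞},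
        ψ (v * v') = ψ v * ψ v') ∧
      -- homeomorphism for the trace 2-norm metrics
      (∀ u ∈ {u | u ∈ M ∧ u ∈ unitary (H →L[ℂ] H) ∧ n2 (1 - u) < ∞},
        ∀ ε : ℝ≥0∞, 0 < ε → ∃ δ : ℝ≥0∞, 0 < δ ∧
          ∀ u' ∈ {u | u ∈ M ∧ u ∈ unitary (H →L[ℂ] H) ∧ n2 (1 - u) < ∞},
            n2 (u' - u) < δ → m2 (φ u' - φ u) < ε) ∧
      (∀ v ∈ {v : K →L[ℂ] K | v ∈ unitary (K →L[ℂ] K) ∧ m2 (1 - v) < ∞},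
        ∀ ε : ℝ≥0∞, 0 < ε → ∃ δ : ℝ≥0∞, 0 < δ ∧
          ∀ v' ∈ {v : K →L[ℂ] K | v ∈ unitary (K →L[ℂ] K) ∧ m2 (1 - v) < ∞},
            m2 (v' - v) < δ → n2 (ψ v' - ψ v) < ε) := by
  rintro ⟨φ, ψ, hφmem, hψmem, hψφ, hφψ, hφmul, hψmul, hφcont, hψcont⟩
  have h1H : (1 : H →L[ℂ] H) ∈
      {u | u ∈ M ∧ u ∈ unitary (H →L[ℂ] H) ∧ n2 (1 - u) < ∞} := by
    refine ⟨one_mem M, one_mem (unitary (H →L[ℂ] H)), ?_⟩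
    rw [sub_self, hzero]; norm_num
  have h1K : (1 : K →L[ℂ] K) ∈
      {v : K →L[ℂ] K | v ∈ unitary (K →L[ℂ] K) ∧ m2 (1 - v) < ∞} := by
    refine ⟨one_mem (unitary (K →L[ℂ] K)), ?_⟩
    rw [sub_self, hzero']; norm_num
  have hφ1 : φ 1 = 1 := by
    have h := hφmul 1 h1H 1 h1H
    rw [one_mul] at h
    exact aux15_idem_one _ (Unitary.mem_iff.mp (hφmem 1 h1H).1).1 h
  have hψ1 : ψ 1 = 1 := by
    have h := hψmul 1 h1K 1 h1K
    rw [one_mul] at h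
    exact aux15_idem_one _ (Unitary.mem_iff.mp (hψmem 1 h1K).2.1).1 h
  -- transfer the nonzero finite projection on `K` to a nonzero finite projection in `M`
  obtain ⟨p, hpsa, hppp, hpne, hpfin⟩ := hfin
  obtain ⟨hvstar, hvsq⟩ := aux15_proj_sym p hpsa hppp
  set v : K →L[ℂ] K := 1 - (2:ℂ) • p with hvdef
  have hvU : v ∈ unitary (K →L[ℂ] K) :=
    Unitary.mem_iff.mpr ⟨by rw [hvstar]; exact hvsq, by rw [hvstar]; exact hvsq⟩
  have h1v : (1 : K →L[ℂ] K) - v = (2:ℂ) • p := by rw [hvdef]; abel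
  have hvmem : v ∈ {v : K →L[ℂ] K | v ∈ unitary (K →L[ℂ] K) ∧ m2 (1 - v) < ∞} := by
    refine ⟨hvU, ?_⟩
    rw [h1v, hsmul' 2 p, aux15_norm2]
    exact ENNReal.mul_lt_top (by norm_num) hpfin
  set u : H →L[ℂ] H := ψ v with hudef
  obtain ⟨huM, huU, hufin⟩ := hψmem v hvmem
  have husq : u * u = 1 := by
    have h := hψmul v hvmem v hvmem
    rw [hvsq, hψ1] at h
    exact h.symm
  have hune : u ≠ 1 := by
    intro h
    have hv1 : v = 1 := by rw [← hφψ v hvmem, ← hudef, h, hφ1]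
    apply hpne
    have h0 : (2:ℂ) • p = 0 := by rw [← h1v, hv1, sub_self]
    simpa using h0
  have hustar : star u = u := aux15_sym_sa u (Unitary.mem_iff.mp huU).1 husq
  obtain ⟨hqsa, hqpp, hq2⟩ := aux15_sym_proj u hustar husq
  set q : H →L[ℂ] H := (2⁻¹:ℂ) • (1 - u) with hqdef
  have hqM : q ∈ M := M.toStarSubalgebra.smul_mem (sub_mem (one_mem M) huM) _
  have hqne : q ≠ 0 := by
    intro h
    apply hune
    have h0 : (1 : H →L[ℂ] H) - u = 0 := by rw [← hq2, h, smul_zero]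
    exact (sub_eq_zero.mp h0).symm
  have hqfin : n2 q < ∞ := by
    rw [hqdef, hsmul]
    exact ENNReal.mul_lt_top ENNReal.coe_lt_top hufin
  -- continuity of φ at 1 with ε = 1
  obtain ⟨δ, hδ, hcont⟩ := hφcont 1 h1H 1 zero_lt_one
  obtain ⟨p₀, hp₀M, hp₀sa, hp₀pp, hp₀ne, -, -, hp₀small⟩ :=
    hII q hqM hqsa hqpp hqne hqfin (δ/2) (ENNReal.div_pos hδ.ne' (by norm_num))
  obtain ⟨hu'star, hu'sq⟩ := aux15_proj_sym p₀ hp₀sa hp₀pp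
  set u' : H →L[ℂ] H := 1 - (2:ℂ) • p₀ with hu'def
  have hu'U : u' ∈ unitary (H →L[ℂ] H) :=
    Unitary.mem_iff.mpr ⟨by rw [hu'star]; exact hu'sq, by rw [hu'star]; exact hu'sq⟩
  have h1u' : (1 : H →L[ℂ] H) - u' = (2:ℂ) • p₀ := by rw [hu'def]; abel
  have hu'mem : u' ∈
      {u | u ∈ M ∧ u ∈ unitary (H →L[ℂ] H) ∧ n2 (1 - u) < ∞} := by
    refine ⟨sub_mem (one_mem M) (M.toStarSubalgebra.smul_mem hp₀M _), hu'U, ?_⟩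
    rw [h1u', hsmul, aux15_norm2]
    exact ENNReal.mul_lt_top (by norm_num) (lt_of_lt_of_le hp₀small le_top)
  have hdist : n2 (u' - 1) < δ := by
    have he : u' - 1 = (-2:ℂ) • p₀ := by rw [hu'def, neg_smul]; abel
    rw [he, hsmul, aux15_normneg2]
    calc 2 * n2 p₀ < 2 * (δ/2) :=
          (ENNReal.mul_lt_mul_iff_right (by norm_num) (by norm_num)).mpr hp₀small
      _ ≤ δ := ENNReal.mul_div_le
  have hlt := hcont u' hu'mem hdist
  rw [hφ1] at hlt
  set v' : K →L[ℂ] K := φ u' with hv'def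
  obtain ⟨hv'U, -⟩ := hφmem u' hu'mem
  have hv'sq : v' * v' = 1 := by
    have h := hφmul u' hu'mem u' hu'mem
    rw [hu'sq, hφ1] at h
    exact h.symm
  have hv'ne : v' ≠ 1 := by
    intro h
    apply hp₀ne
    have hu'1 : u' = 1 := by rw [← hψφ u' hu'mem, ← hv'def, h, hψ1]
    have h0 : (2:ℂ) • p₀ = 0 := by rw [← h1u', hu'1, sub_self]
    simpa using h0
  have hv'star : star v' = v' := aux15_sym_sa v' (Unitary.mem_iff.mp hv'U).1 hv'sq
  obtain ⟨hp'sa, hp'pp, hp'2⟩ := aux15_sym_proj v' hv'star hv'sq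
  have hp'ne : (2⁻¹:ℂ) • (1 - v') ≠ 0 := by
    intro h
    apply hv'ne
    have h0 : (1 : K →L[ℂ] K) - v' = 0 := by rw [← hp'2, h, smul_zero]
    exact (sub_eq_zero.mp h0).symm
  have hge := hProj _ hp'sa hp'pp hp'ne
  have key : (1:ℝ≥0∞) ≤ m2 (v' - 1) := by
    have he : v' - 1 = (-2:ℂ) • ((2⁻¹:ℂ) • (1 - v')) := by
      rw [smul_smul]
      norm_num
    rw [he, hsmul', aux15_normneg2]
    exact le_trans hge (le_mul_of_one_le_left zero_le one_le_two)
  exact absurd hlt (not_lt.mpr key)
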